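/- Let k > 1 be an integer and w the infinite binary word with 1-distribution function G(n) = k^{n-1}. Then the subword complexity of w satisfies f_w(n) = Θ(n): there exist positive constants c₁, c₂ independent of k such that c₁ n ≤ f_w(n) ≤ c₂ n for all sufficiently large n. -/

import Mathlib

/-- `u` occurs in `w` starting at position `i` (positions are 1-indexed). -/
def FactorAt (w : ℕ → Fin 2) (i : ℕ) (u : List (Fin 2)) : Prop :=
  u = (List.range u.length).map (fun k => w (i + k))

/-- `u` is a subword (factor) of the infinite word `w`. -/
def IsFactor (w : ℕ → Fin 2) (u : List (Fin 2)) : Prop :=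
  ∃ i, 1 ≤ i ∧ FactorAt w i u

/-- The subword complexity function of `w`. -/
noncomputable def complexity (w : ℕ → Fin 2) (n : ℕ) : ℕ :=
  Set.ncard {u : List (Fin 2) | u.length = n ∧ IsFactor w u}

/-- `G` is the 1-distribution function of `w`: `G 0 = 0` and `G i` is the
position of the `i`-th `1` of `w` (positions 1-indexed). -/
def OneDistrib (w : ℕ → Fin 2) (G : ℕ → ℕ) : Prop :=
  G 0 = 0 ∧ StrictMono G ∧ ∀ p, 1 ≤ p → (w p = 1 ↔ ∃ i, 1 ≤ i ∧ G i = p)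

/-- The gap function associated with a 1-distribution function `G`. -/
def gap (G : ℕ → ℕ) (i : ℕ) : ℕ := G i - G (i - 1)

/-- The gap function is strictly increasing. -/
def GapIncreasing (G : ℕ → ℕ) : Prop :=
  ∀ i, 1 ≤ i → gap G i < gap G (i + 1)

/-- `u` is a right special factor of `w`. -/
def RightSpecial (w : ℕ → Fin 2) (u : List (Fin 2)) : Prop :=
  IsFactor w (u ++ [0]) ∧ IsFactor w (u ++ [1])

namespace Stmt4Aux

/-- The pattern with a single `1` at offset `j`, length `n`. -/
def onepat (j n : ℕ) : List (Fin 2) :=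
  (List.range n).map (fun t => if t = j then 1 else 0)

/-- The window of `w` of length `n` starting at position `i`. -/
def Wd (w : ℕ → Fin 2) (i n : ℕ) : List (Fin 2) :=
  (List.range n).map (fun t => w (i + t))

lemma length_onepat (j n : ℕ) : (onepat j n).length = n := by simp [onepat]

lemma length_Wd (w : ℕ → Fin 2) (i n : ℕ) : (Wd w i n).length = n := by simp [Wd]

lemma pow_lt_pow' {k a b : ℕ} (hk : 1 < k) (h : k ^ a < k ^ b) : a < b :=
  (Nat.pow_lt_pow_iff_right hk).1 h

lemma one_iff {k : ℕ} {w : ℕ → Fin 2}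
    (H : OneDistrib w (fun n => if n = 0 then 0 else k ^ (n - 1)))
    {p : ℕ} (hp : 1 ≤ p) : w p = 1 ↔ ∃ m, k ^ m = p := by
  rw [H.2.2 p hp]
  constructor
  · rintro ⟨i, hi, h⟩
    refine ⟨i - 1, ?_⟩
    simpa [Nat.one_le_iff_ne_zero.1 hi] using h
  · rintro ⟨m, rfl⟩
    exact ⟨m + 1, by omega, by simp⟩

lemma fin2_zero_iff (a : Fin 2) : a = 0 ↔ ¬ a = 1 := by
  revert a; decide

lemma zero_iff {k : ℕ} {w : ℕ → Fin 2}
    (H : OneDistrib w (fun n => if n = 0 then 0 else k ^ (n - 1)))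
    {p : ℕ} (hp : 1 ≤ p) : w p = 0 ↔ ¬ ∃ m, k ^ m = p := by
  rw [fin2_zero_iff, one_iff H hp]

lemma two_ones {k i n a b ma mb : ℕ} (hk : 1 < k) (hab : a < b) (hbn : b < n)
    (ha : k ^ ma = i + a) (hb : k ^ mb = i + b) : i ≤ n := by
  have h1 : ma < mb := pow_lt_pow' hk (by omega)
  have h2 : k ^ (ma + 1) ≤ k ^ mb := Nat.pow_le_pow_right (by omega) (by omega)
  have h3 : k ^ ma * k = k ^ (ma + 1) := (pow_succ k ma).symm
  have h4 : k ^ ma * 2 ≤ k ^ ma * k := Nat.mul_le_mul le_rfl (by omega)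
  have h5 : 1 ≤ k ^ ma := Nat.one_le_pow _ _ (by omega)
  omega

lemma classify {k : ℕ} {w : ℕ → Fin 2} (hk : 1 < k)
    (H : OneDistrib w (fun n => if n = 0 then 0 else k ^ (n - 1)))
    {i n : ℕ} (hi : 1 ≤ i) :
    Wd w i n = List.replicate n 0 ∨ (∃ j < n, Wd w i n = onepat j n) ∨ i ≤ n := by
  classical
  set T := (Finset.range n).filter (fun t => w (i + t) = 1) with hT
  by_cases h2 : 2 ≤ T.card
  · right; right
    obtain ⟨a, ha, b, hb, hab⟩ := Finset.one_lt_card.1 h2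
    rw [hT, Finset.mem_filter, Finset.mem_range] at ha hb
    obtain ⟨ma, hma⟩ := (one_iff H (by omega)).1 ha.2
    obtain ⟨mb, hmb⟩ := (one_iff H (by omega)).1 hb.2
    rcases Nat.lt_or_ge a b with h | h
    · exact two_ones hk h hb.1 hma hmb
    · exact two_ones hk (by omega) ha.1 hmb hma
  · have hmem : ∀ t, t ∈ T ↔ t < n ∧ w (i + t) = 1 := by
      intro t; rw [hT, Finset.mem_filter, Finset.mem_range]
    by_cases h0 : T.card = 0
    · left
      have hemp : T = ∅ := Finset.card_eq_zero.1 h0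
      refine List.eq_replicate_iff.2 ⟨length_Wd w i n, ?_⟩
      intro x hx
      simp only [Wd, List.mem_map, List.mem_range] at hx
      obtain ⟨t, ht, rfl⟩ := hx
      have : ¬ w (i + t) = 1 := by
        intro h1
        have : t ∈ T := (hmem t).2 ⟨ht, h1⟩
        simp [hemp] at this
      exact (fin2_zero_iff _).2 this
    · right; left
      have hc1 : T.card = 1 := by omega
      obtain ⟨j, hj⟩ := Finset.card_eq_one.1 hc1
      have hjT : j ∈ T := by simp [hj]
      have hjn : j < n := ((hmem j).1 hjT).1
      refine ⟨j, hjn, ?_⟩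
      refine List.ext_getElem (by simp [length_Wd, length_onepat]) ?_
      intro t ht1 ht2
      have htn : t < n := by simpa [length_Wd] using ht1
      simp only [Wd, onepat, List.getElem_map, List.getElem_range]
      by_cases htj : t = j
      · subst htj
        simp only [if_pos rfl]
        exact ((hmem t).1 hjT).2
      · rw [if_neg htj]
        refine (fin2_zero_iff _).2 (fun h1 => htj ?_)
        have : t ∈ T := (hmem t).2 ⟨htn, h1⟩
        rw [hj] at this
        simpa using this

lemma occ {k : ℕ} {w : ℕ → Fin 2} (hk : 1 < k)
    (H : OneDistrib w (fun n => if n = 0 then 0 else k ^ (n - 1)))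
    {n j : ℕ} (hj : j < n) :
    ∃ i, 1 ≤ i ∧ Wd w i n = onepat j n := by
  have hA : n < k ^ n := Nat.lt_pow_self hk
  have e1 : k ^ n * k = k ^ (n + 1) := (pow_succ k n).symm
  have e2 : k ^ (n + 1) * k = k ^ (n + 2) := (pow_succ k (n + 1)).symm
  have m1 : k ^ n * 2 ≤ k ^ n * k := Nat.mul_le_mul le_rfl (by omega)
  have m2 : k ^ (n + 1) * 2 ≤ k ^ (n + 1) * k := Nat.mul_le_mul le_rfl (by omega)
  refine ⟨k ^ (n + 1) - j, by omega, ?_⟩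
  refine List.ext_getElem (by simp [length_Wd, length_onepat]) ?_
  intro t ht1 ht2
  have htn : t < n := by simpa [length_Wd] using ht1
  simp only [Wd, onepat, List.getElem_map, List.getElem_range]
  by_cases htj : t = j
  · subst htj
    rw [if_pos rfl]
    have hpt : k ^ (n + 1) - t + t = k ^ (n + 1) := by omega
    rw [hpt]
    exact (one_iff H (by omega)).2 ⟨n + 1, rfl⟩
  · rw [if_neg htj]
    refine (zero_iff H (by omega)).2 ?_
    rintro ⟨m, hm⟩
    rcases Nat.lt_or_ge t j with h | h
    · -- k^n < q < k^(n+1)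
      have hb1 : k ^ n < k ^ m := by omega
      have hb2 : k ^ m < k ^ (n + 1) := by omega
      have := pow_lt_pow' hk hb1
      have := pow_lt_pow' hk hb2
      omega
    · have hb1 : k ^ (n + 1) < k ^ m := by omega
      have hb2 : k ^ m < k ^ (n + 2) := by omega
      have := pow_lt_pow' hk hb1
      have := pow_lt_pow' hk hb2
      omega

lemma onepat_inj {n j1 j2 : ℕ} (h1 : j1 < n) (h2 : j2 < n)
    (he : onepat j1 n = onepat j2 n) : j1 = j2 := by
  have e1 : (onepat j1 n)[j1]? = some 1 := by
    simp [onepat, List.getElem?_map, List.getElem?_range, h1]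
  rw [he] at e1
  simp only [onepat, List.getElem?_map, List.getElem?_range, h1, if_pos] at e1
  by_contra hne
  simp [hne] at e1

end Stmt4Aux

open Stmt4Aux in
theorem stmt4 :
    ∃ c₁ c₂ : ℝ, 0 < c₁ ∧ 0 < c₂ ∧
      ∀ k : ℕ, 1 < k → ∀ w : ℕ → Fin 2,
        OneDistrib w (fun n => if n = 0 then 0 else k ^ (n - 1)) →
        ∃ N : ℕ, ∀ n, N ≤ n →
          c₁ * (n : ℝ) ≤ (complexity w n : ℝ) ∧ (complexity w n : ℝ) ≤ c₂ * (n : ℝ) := by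
  classical
  refine ⟨1, 3, one_pos, by norm_num, ?_⟩
  intro k hk w hG
  refine ⟨1, ?_⟩
  intro n hn
  set S : Set (List (Fin 2)) := {u : List (Fin 2) | u.length = n ∧ IsFactor w u} with hS
  set F : Finset (List (Fin 2)) :=
    ((Finset.Icc 1 n).image (fun i => Wd w i n)) ∪
    ((Finset.range n).image (fun j => onepat j n)) ∪ {List.replicate n (0 : Fin 2)} with hF
  have hsub : S ⊆ ↑F := by
    rintro u ⟨hlen, i, hi, hfa⟩
    have hu : u = Wd w i n := by
      rw [FactorAt, hlen] at hfa
      exact hfa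
    rw [hF]
    simp only [Finset.coe_union, Set.mem_union, Finset.coe_image, Set.mem_image,
      Finset.mem_coe, Finset.mem_Icc, Finset.mem_range, Finset.coe_singleton,
      Set.mem_singleton_iff]
    rcases classify hk hG hi (n := n) with h | ⟨j, hjn, h⟩ | h
    · right; rw [hu, h]
    · left; right; exact ⟨j, hjn, by rw [hu, h]⟩
    · left; left; exact ⟨i, ⟨hi, h⟩, hu.symm⟩
  have hcardF : F.card ≤ 2 * n + 1 := by
    calc F.card ≤ (((Finset.Icc 1 n).image (fun i => Wd w i n)) ∪
        ((Finset.range n).image (fun j => onepat j n))).card + 1 := by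
          rw [hF]
          exact le_trans (Finset.card_union_le _ _) (by simp)
    _ ≤ ((Finset.Icc 1 n).image (fun i => Wd w i n)).card +
        ((Finset.range n).image (fun j => onepat j n)).card + 1 := by
          have := Finset.card_union_le ((Finset.Icc 1 n).image (fun i => Wd w i n))
            ((Finset.range n).image (fun j => onepat j n))
          omega
    _ ≤ n + n + 1 := by
          have c1 := Finset.card_image_le (s := Finset.Icc 1 n) (f := fun i => Wd w i n)
          have c2 := Finset.card_image_le (s := Finset.range n) (f := fun j => onepat j n)
          rw [Nat.card_Icc] at c1
          rw [Finset.card_range] at c2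
          omega
    _ = 2 * n + 1 := by ring
  have hcomp : complexity w n = S.ncard := rfl
  have hup : complexity w n ≤ 2 * n + 1 := by
    rw [hcomp]
    calc S.ncard ≤ (↑F : Set (List (Fin 2))).ncard :=
          Set.ncard_le_ncard hsub F.finite_toSet
    _ = F.card := Set.ncard_coe_finset F
    _ ≤ 2 * n + 1 := hcardF
  have hSfin : S.Finite := F.finite_toSet.subset hsub
  set B : Finset (List (Fin 2)) := (Finset.range n).image (fun j => onepat j n) with hB
  have hBcard : B.card = n := by
    rw [hB, Finset.card_image_of_injOn, Finset.card_range]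
    intro j1 h1 j2 h2 he
    exact onepat_inj (by simpa using h1) (by simpa using h2) he
  have hBsub : ↑B ⊆ S := by
    intro u hu
    rw [hB] at hu
    simp only [Finset.coe_image, Set.mem_image, Finset.mem_coe, Finset.mem_range] at hu
    obtain ⟨j, hj, rfl⟩ := hu
    refine ⟨length_onepat j n, ?_⟩
    obtain ⟨i, hi, heq⟩ := occ hk hG hj
    refine ⟨i, hi, ?_⟩
    rw [FactorAt, length_onepat]
    exact heq.symm
  have hlow : n ≤ complexity w n := by
    rw [hcomp]
    have h1 := Set.ncard_le_ncard hBsub hSfin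
    rwa [Set.ncard_coe_finset, hBcard] at h1
  constructor
  · rw [one_mul]
    exact_mod_cast hlow
  · have : (complexity w n : ℝ) ≤ 2 * n + 1 := by exact_mod_cast hup
    have hn' : (1 : ℝ) ≤ n := by exact_mod_cast hn
    linarith
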